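/- A countable hypergraph E has a minimal cover if every infinite set I ⊆ ⋃E contains a finite subset F ⊆ I such that the family E_F := {S ∈ E : F ⊆ S} is finite. -/

import Mathlib

/-- `C` is a cover of the hypergraph `E`. -/
def IsCover {α : Type*} (E C : Set (Set α)) : Prop :=
  C ⊆ E ∧ ⋃₀ C = ⋃₀ E

/-- `C` is a minimal cover of the hypergraph `E`. -/
def IsMinimalCover {α : Type*} (E C : Set (Set α)) : Prop :=
  IsCover E C ∧ ∀ D ⊆ C, IsCover E D → D = C

/-- `S` is a subhypergraph of `E`. -/
def IsSubhypergraph {α : Type*} (E S : Set (Set α)) : Prop :=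
  ∃ F ⊆ E, ∃ A ⊆ ⋃₀ F, S = (fun T => T ∩ A) '' F

/-- `S` has a maximal edge. -/
def HasMaximalEdge {α : Type*} (S : Set (Set α)) : Prop :=
  ∃ M ∈ S, ∀ T ∈ S, M ⊆ T → T = M

/-- `S` is isomorphic to the hypergraph ω, whose vertex set is ℕ and whose
edges are the initial segments `{0, …, n-1}` for `n : ℕ`. -/
def IsoToOmega {α : Type*} (S : Set (Set α)) : Prop :=
  ∃ f : ℕ → α, Function.Injective f ∧ Set.range f = ⋃₀ S ∧
    S = {T | ∃ n : ℕ, T = f '' Set.Iio n}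

namespace MCaux

variable {α : Type*}

/-- The set of vertices covered by a partial state. -/
def covered (L : List (Set α × α)) : Set α := {a | ∃ p ∈ L, a ∈ p.1}

/-- Invariants of the construction state: each pair consists of an edge of `E`
together with a witness vertex in it; witnesses lie in no other chosen edge;
and every uncovered vertex lies in some edge avoiding all witnesses. -/
structure Good (E : Set (Set α)) (L : List (Set α × α)) : Prop where
  mem : ∀ p ∈ L, p.1 ∈ E ∧ p.2 ∈ p.1
  priv : L.Pairwise fun p q => p.2 ∉ q.1 ∧ q.2 ∉ p.1
  ext : ∀ u ∈ ⋃₀ E, u ∉ covered L → ∃ S ∈ E, u ∈ S ∧ ∀ p ∈ L, p.2 ∉ S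

/-- Key combinatorial lemma: given a family of "available" edges `G u` through
each vertex `u`, there is a vertex `w` that is minimal (up to equivalence) in
the preorder `u ⊑ x ↔ ∀ S ∈ G u, x ∈ S`, below `v₀`. -/
theorem key {E : Set (Set α)}
    (h : ∀ I ⊆ ⋃₀ E, I.Infinite → ∃ F ⊆ I, F.Finite ∧ {S ∈ E | F ⊆ S}.Finite)
    (G : α → Set (Set α))
    (hGE : ∀ u S, S ∈ G u → S ∈ E ∧ u ∈ S)
    (hGmono : ∀ u y S, S ∈ G y → u ∈ S → S ∈ G u)
    (U : Set α) (hGne : ∀ u ∈ U, (G u).Nonempty)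
    (v₀ : α) (hv₀ : v₀ ∈ U) :
    ∃ w ∈ U, (∀ S ∈ G w, v₀ ∈ S) ∧
      ∀ u ∈ U, (∀ S ∈ G u, w ∈ S) → ∀ S ∈ G w, u ∈ S := by
  by_contra hcon
  push_neg at hcon
  -- Build a strictly descending sequence in the preorder.
  have step : ∀ d : {w : α // w ∈ U ∧ ∀ S ∈ G w, v₀ ∈ S},
      ∃ e : {w : α // w ∈ U ∧ ∀ S ∈ G w, v₀ ∈ S},
        (∀ S ∈ G e.val, d.val ∈ S) ∧ ∃ S ∈ G d.val, e.val ∉ S := by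
    rintro ⟨w, hwU, hwv⟩
    obtain ⟨u, huU, hu1, hu2⟩ := hcon w hwU hwv
    exact ⟨⟨u, huU, fun S hS => hwv S (hGmono w u S hS (hu1 S hS))⟩, hu1, hu2⟩
  choose f hf1 hf2 using step
  have hd0 : v₀ ∈ U ∧ ∀ S ∈ G v₀, v₀ ∈ S := ⟨hv₀, fun S hS => (hGE v₀ S hS).2⟩
  obtain ⟨x, hxU, hA, hB⟩ : ∃ x : ℕ → α, (∀ n, x n ∈ U) ∧
      (∀ n, ∀ S ∈ G (x (n+1)), x n ∈ S) ∧ (∀ n, ∃ S ∈ G (x n), x (n+1) ∉ S) := by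
    refine ⟨fun n => (f^[n] ⟨v₀, hd0⟩).val, fun n => (f^[n] ⟨v₀, hd0⟩).2.1, ?_, ?_⟩
    · intro n
      have h1 := hf1 (f^[n] ⟨v₀, hd0⟩)
      rw [← Function.iterate_succ_apply' f n ⟨v₀, hd0⟩] at h1
      exact h1
    · intro n
      have h2 := hf2 (f^[n] ⟨v₀, hd0⟩)
      rw [← Function.iterate_succ_apply' f n ⟨v₀, hd0⟩] at h2
      exact h2
  have fact_le : ∀ n k, k ≤ n → ∀ S ∈ G (x n), x k ∈ S := by
    intro n
    induction n with
    | zero =>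
      intro k hk S hS
      obtain rfl : k = 0 := Nat.le_zero.mp hk
      exact (hGE _ _ hS).2
    | succ n ih =>
      intro k hk S hS
      rcases Nat.eq_or_lt_of_le hk with rfl | hk'
      · exact (hGE _ _ hS).2
      · exact ih k (Nat.lt_succ_iff.mp hk') S (hGmono (x n) (x (n+1)) S hS (hA n S hS))
  have hinj : Function.Injective x := by
    have hne : ∀ m n, m < n → x m ≠ x n := by
      intro m n hmn heq
      obtain ⟨S, hS, hnS⟩ := hB m
      rw [heq] at hS
      exact hnS (fact_le n (m+1) hmn S hS)
    intro a b hab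
    rcases lt_trichotomy a b with hlt | heq | hlt
    · exact absurd hab (hne a b hlt)
    · exact heq
    · exact absurd hab.symm (hne b a hlt)
  by_cases hfin : ∃ N : ℕ, {S | S ∈ E ∧ ∀ k ≤ N, x k ∈ S}.Finite
  · -- the available families along the sequence stabilize : contradiction
    obtain ⟨N, hN⟩ := hfin
    have hg_sub : ∀ m, G (x (N + m)) ⊆ {S | S ∈ E ∧ ∀ k ≤ N, x k ∈ S} := by
      intro m S hS
      exact ⟨(hGE _ _ hS).1,
        fun k hk => fact_le (N + m) k (le_trans hk (Nat.le_add_right N m)) S hS⟩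
    have hg_mono : ∀ m, G (x (N + (m+1))) ⊆ G (x (N + m)) := by
      intro m S hS
      exact hGmono _ _ S hS (hA (N + m) S hS)
    have hfing : ∀ m, (G (x (N + m))).Finite := fun m => hN.subset (hg_sub m)
    have hex : ∃ M, (G (x (N + M))).ncard ≤ (G (x (N + (M+1)))).ncard := by
      by_contra hcc
      push_neg at hcc
      have hlin : ∀ m, (G (x (N + m))).ncard + m ≤ (G (x (N + 0))).ncard := by
        intro m
        induction m with
        | zero => simp
        | succ m ih =>
          have h1 := hcc m
          omega
      have h2 := hlin ((G (x (N + 0))).ncard + 1)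
      omega
    obtain ⟨M, hM⟩ := hex
    have heq : G (x (N + (M+1))) = G (x (N + M)) :=
      Set.eq_of_subset_of_ncard_le (hg_mono M) hM (hfing M)
    obtain ⟨S, hS, hnS⟩ := hB (N + M)
    apply hnS
    have hS' : S ∈ G (x (N + (M+1))) := by rw [heq]; exact hS
    exact (hGE _ _ hS').2
  · -- the sequence is an `ω`-like set : contradicts `h`
    push_neg at hfin
    have hIinf : (Set.range x).Infinite := Set.infinite_range_of_injective hinj
    have hIsub : Set.range x ⊆ ⋃₀ E := by
      rintro _ ⟨n, rfl⟩
      obtain ⟨S, hS⟩ := hGne (x n) (hxU n)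
      exact ⟨S, (hGE _ _ hS).1, (hGE _ _ hS).2⟩
    obtain ⟨F, hFsub, hFfin, hFE⟩ := h _ hIsub hIinf
    have hpre : (x ⁻¹' F).Finite := hFfin.preimage hinj.injOn
    have hFm : ∀ y ∈ F, ∃ k, k ≤ hpre.toFinset.sup id ∧ x k = y := by
      intro y hy
      obtain ⟨k, rfl⟩ := hFsub hy
      refine ⟨k, ?_, rfl⟩
      have hk : k ∈ hpre.toFinset := by
        rw [Set.Finite.mem_toFinset]; exact hy
      exact Finset.le_sup (f := id) hk
    have hsub2 : {S | S ∈ E ∧ ∀ k ≤ hpre.toFinset.sup id, x k ∈ S} ⊆ {S ∈ E | F ⊆ S} := by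
      intro S hS
      refine ⟨hS.1, fun y hy => ?_⟩
      obtain ⟨k, hk, hky⟩ := hFm y hy
      exact hky ▸ hS.2 k hk
    exact hfin _ (hFE.subset hsub2)

/-- One construction step: an uncovered vertex can be covered while preserving
the invariants. -/
theorem step {E : Set (Set α)}
    (h : ∀ I ⊆ ⋃₀ E, I.Infinite → ∃ F ⊆ I, F.Finite ∧ {S ∈ E | F ⊆ S}.Finite)
    {L : List (Set α × α)} (hL : Good E L)
    {v₀ : α} (hv₀V : v₀ ∈ ⋃₀ E) (hv₀u : v₀ ∉ covered L) :
    ∃ T w, Good E ((T, w) :: L) ∧ v₀ ∈ T := by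
  have hGE : ∀ u S, S ∈ {S | S ∈ E ∧ u ∈ S ∧ ∀ p ∈ L, p.2 ∉ S} → S ∈ E ∧ u ∈ S :=
    fun u S hS => ⟨hS.1, hS.2.1⟩
  have hGmono : ∀ u y S, S ∈ {S | S ∈ E ∧ y ∈ S ∧ ∀ p ∈ L, p.2 ∉ S} → u ∈ S →
      S ∈ {S | S ∈ E ∧ u ∈ S ∧ ∀ p ∈ L, p.2 ∉ S} :=
    fun u y S hS hu => ⟨hS.1, hu, hS.2.2⟩
  have hGne : ∀ u ∈ {u | u ∈ ⋃₀ E ∧ u ∉ covered L},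
      ({S | S ∈ E ∧ u ∈ S ∧ ∀ p ∈ L, p.2 ∉ S} : Set (Set α)).Nonempty := by
    intro u hu
    obtain ⟨S, hSE, huS, hw⟩ := hL.ext u hu.1 hu.2
    exact ⟨S, hSE, huS, hw⟩
  obtain ⟨w, hwU, hwv, hmin⟩ :=
    key h (fun u => {S | S ∈ E ∧ u ∈ S ∧ ∀ p ∈ L, p.2 ∉ S}) hGE hGmono
      {u | u ∈ ⋃₀ E ∧ u ∉ covered L} hGne v₀ ⟨hv₀V, hv₀u⟩
  obtain ⟨T, hT⟩ := hGne w hwU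
  refine ⟨T, w, ⟨?_, ?_, ?_⟩, hwv T hT⟩
  · rintro p hp
    rcases List.mem_cons.mp hp with rfl | hp'
    · exact ⟨hT.1, hT.2.1⟩
    · exact hL.mem p hp'
  · refine List.Pairwise.cons ?_ hL.priv
    intro q hq
    constructor
    · intro hwq
      exact hwU.2 ⟨q, hq, hwq⟩
    · exact hT.2.2 q hq
  · intro u huV hunc
    have huT : u ∉ T := fun hin => hunc ⟨(T, w), List.mem_cons_self, hin⟩
    have huL : u ∉ covered L := by
      rintro ⟨p, hp, hup⟩
      exact hunc ⟨p, List.mem_cons_of_mem _ hp, hup⟩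
    by_contra hno
    push_neg at hno
    have huw : ∀ S ∈ {S | S ∈ E ∧ u ∈ S ∧ ∀ p ∈ L, p.2 ∉ S}, w ∈ S := by
      intro S hS
      obtain ⟨p, hp, hpS⟩ := hno S hS.1 hS.2.1
      rcases List.mem_cons.mp hp with rfl | hp'
      · exact hpS
      · exact absurd hpS (hS.2.2 p hp')
    exact huT (hmin u ⟨huV, huL⟩ huw T hT)

end MCaux

theorem stmt_6 {α : Type*} (E : Set (Set α))
    (hEc : E.Countable) (hVc : (⋃₀ E).Countable)
    (h : ∀ I ⊆ ⋃₀ E, I.Infinite →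
      ∃ F ⊆ I, F.Finite ∧ {S ∈ E | F ⊆ S}.Finite) :
    ∃ C, IsMinimalCover E C := by
  classical
  rcases Set.eq_empty_or_nonempty (⋃₀ E) with hV | hV
  · refine ⟨∅, ⟨⟨Set.empty_subset E, ?_⟩, fun D hD _ => Set.subset_empty_iff.mp hD⟩⟩
    rw [Set.sUnion_empty, hV]
  · obtain ⟨v, hv⟩ := hVc.exists_eq_range hV
    have good_nil : MCaux.Good E ([] : List (Set α × α)) := by
      refine ⟨?_, List.Pairwise.nil, ?_⟩
      · intro p hp; cases hp
      · intro u huV _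
        obtain ⟨S, hSE, huS⟩ := huV
        exact ⟨S, hSE, huS, fun p hp => absurd hp List.not_mem_nil⟩
    have EXSTEP : ∀ L : List (Set α × α), MCaux.Good E L →
        ∃ L' : List (Set α × α), MCaux.Good E L' ∧ (∀ p ∈ L, p ∈ L') ∧
          (∀ m : ℕ, v m ∉ MCaux.covered L → (∀ k < m, v k ∈ MCaux.covered L) →
            v m ∈ MCaux.covered L') := by
      intro L hL
      by_cases hc : ∃ m, v m ∉ MCaux.covered L
      · have hunc : v (Nat.find hc) ∉ MCaux.covered L := Nat.find_spec hc
        have hmV : v (Nat.find hc) ∈ ⋃₀ E := by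
          rw [hv]; exact ⟨Nat.find hc, rfl⟩
        obtain ⟨T, w, hGood, hvT⟩ := MCaux.step h hL hmV hunc
        refine ⟨(T, w) :: L, hGood, fun p hp => List.mem_cons_of_mem _ hp, ?_⟩
        intro m hm hmall
        have hm1 : ¬ m < Nat.find hc := by
          intro hlt
          exact absurd hm (not_not.mpr (by
            by_contra hcontra
            exact (Nat.find_min hc hlt) hcontra))
        have hm2 : ¬ Nat.find hc < m := fun hlt => hunc (hmall _ hlt)
        have hm3 : m = Nat.find hc := by omega
        rw [hm3]
        exact ⟨(T, w), List.mem_cons_self, hvT⟩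
      · push_neg at hc
        exact ⟨L, hL, fun p hp => hp, fun m hm _ => absurd (hc m) hm⟩
    choose nxt hg hmono hcov using EXSTEP
    obtain ⟨σ, hσs⟩ : ∃ σ : ℕ → {L : List (Set α × α) // MCaux.Good E L},
        ∀ n, (σ (n+1)).1 = nxt (σ n).1 (σ n).2 :=
      ⟨fun n => Nat.rec (motive := fun _ => {L : List (Set α × α) // MCaux.Good E L})
        ⟨[], good_nil⟩ (fun _ q => ⟨nxt q.1 q.2, hg q.1 q.2⟩) n, fun n => rfl⟩
    have hmem_mono : ∀ n p, p ∈ (σ n).1 → p ∈ (σ (n+1)).1 := by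
      intro n p hp
      rw [hσs n]
      exact hmono (σ n).1 (σ n).2 p hp
    have hmem_le : ∀ n n', n ≤ n' → ∀ p ∈ (σ n).1, p ∈ (σ n').1 := by
      intro n n' hle
      induction hle with
      | refl => exact fun p hp => hp
      | step _ ih => exact fun p hp => hmem_mono _ p (ih p hp)
    have hcovmono : ∀ n n', n ≤ n' → ∀ a,
        a ∈ MCaux.covered (σ n).1 → a ∈ MCaux.covered (σ n').1 := by
      rintro n n' hle a ⟨p, hp, hap⟩
      exact ⟨p, hmem_le n n' hle p hp, hap⟩
    have hcovle : ∀ n, ∀ m, m < n → v m ∈ MCaux.covered (σ n).1 := by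
      intro n
      induction n with
      | zero => exact fun m hm => absurd hm (Nat.not_lt_zero m)
      | succ n ih =>
        intro m hm
        rcases Nat.lt_succ_iff_lt_or_eq.mp hm with hm' | hm'
        · exact hcovmono n (n+1) (Nat.le_succ n) _ (ih m hm')
        · subst hm'
          by_cases hcm : v m ∈ MCaux.covered (σ m).1
          · exact hcovmono m (m+1) (Nat.le_succ m) _ hcm
          · have hres := hcov (σ m).1 (σ m).2 m hcm (fun k hk => ih k hk)
            rw [hσs m]
            exact hres
    refine ⟨{S | ∃ n w, (S, w) ∈ (σ n).1}, ⟨⟨?_, ?_⟩, ?_⟩⟩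
    · rintro S ⟨n, w, hmem⟩
      exact ((σ n).2.mem _ hmem).1
    · apply Set.Subset.antisymm
      · apply Set.sUnion_subset_sUnion
        rintro S ⟨n, w, hmem⟩
        exact ((σ n).2.mem _ hmem).1
      · intro a ha
        have : a ∈ Set.range v := by rw [← hv]; exact ha
        obtain ⟨m, rfl⟩ := this
        obtain ⟨p, hp, hap⟩ := hcovle (m+1) m (Nat.lt_succ_self m)
        refine ⟨p.1, ⟨m+1, p.2, ?_⟩, hap⟩
        rw [Prod.mk.eta]
        exact hp
    · intro D hDC hDcov
      apply Set.Subset.antisymm hDC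
      intro S hS
      by_contra hSD
      obtain ⟨n, w, hmem⟩ := hS
      have hwS : w ∈ S := ((σ n).2.mem _ hmem).2
      have hwE : w ∈ ⋃₀ E := ⟨S, ((σ n).2.mem _ hmem).1, hwS⟩
      rw [← hDcov.2] at hwE
      obtain ⟨T, hTD, hwT⟩ := hwE
      obtain ⟨n', w', hmem'⟩ := hDC hTD
      have h1 : (S, w) ∈ (σ (max n n')).1 := hmem_le n _ (le_max_left n n') _ hmem
      have h2 : (T, w') ∈ (σ (max n n')).1 := hmem_le n' _ (le_max_right n n') _ hmem'
      have hne : (S, w) ≠ (T, w') := by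
        intro hEq
        apply hSD
        rw [show S = T from congrArg Prod.fst hEq]
        exact hTD
      have hsym : Symmetric (fun p q : Set α × α => p.2 ∉ q.1 ∧ q.2 ∉ p.1) :=
        fun p q hpq => ⟨hpq.2, hpq.1⟩
      haveI : Std.Symm (fun p q : Set α × α => p.2 ∉ q.1 ∧ q.2 ∉ p.1) := ⟨fun a b h => hsym h⟩
      exact (List.Pairwise.forall (σ (max n n')).2.priv h1 h2 hne).1 hwT
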